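/- Let A be a bal-algebra and I an ℓ-ideal of A. If the archimedean hull ar(I) equals A, then I = A. -/

import Mathlib

/-- A bounded archimedean ℓ-algebra (bal-algebra): a commutative ℝ-algebra with a
lattice order compatible with addition and multiplication, in which the algebra
map from ℝ is order-preserving, `1` is a strong order unit, and the order is
archimedean. -/
structure IsBal (A : Type*) [CommRing A] [Lattice A] [Algebra ℝ A] : Prop where
  add_le_add_right : ∀ a b : A, a ≤ b → ∀ c : A, a + c ≤ b + c
  mul_nonneg : ∀ a b : A, 0 ≤ a → 0 ≤ b → 0 ≤ a * b
  algebraMap_mono : Monotone (algebraMap ℝ A)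
  strong_unit : ∀ a : A, ∃ n : ℕ, 1 ≤ n ∧ a ≤ n • (1 : A)
  arch : ∀ a b : A, (∀ n : ℕ, 1 ≤ n → n • a ≤ b) → a ≤ 0

/-- An ℓ-ideal: a ring ideal `I` such that `|a| ≤ |b|` and `b ∈ I` imply `a ∈ I`,
where `|a| = a ⊔ (-a)`. -/
def IsLIdeal {A : Type*} [CommRing A] [Lattice A] (I : Ideal A) : Prop :=
  ∀ a b : A, b ∈ I → a ⊔ -a ≤ b ⊔ -b → a ∈ I

/-- An archimedean ℓ-ideal: whenever `(n • a - b)⁺ ∈ I` for every integer `n ≥ 1`,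
also `a⁺ ∈ I`, where `x⁺ = x ⊔ 0`. -/
def IsArchLIdeal {A : Type*} [CommRing A] [Lattice A] (I : Ideal A) : Prop :=
  ∀ a b : A, (∀ n : ℕ, 1 ≤ n → (n • a - b) ⊔ 0 ∈ I) → a ⊔ 0 ∈ I

/-- The archimedean hull of a subset `S`: the intersection of all archimedean
ℓ-ideals containing `S`. -/
def archHull {A : Type*} [CommRing A] [Lattice A] (S : Set A) : Ideal A :=
  sInf {I : Ideal A | IsLIdeal I ∧ IsArchLIdeal I ∧ S ⊆ ↑I}

namespace BalAux

variable {A : Type*} [CommRing A] [Lattice A] [Algebra ℝ A]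

theorem cov1 (hA : IsBal A) : AddLeftMono A :=
  ⟨fun c a b h => by simpa [add_comm] using hA.add_le_add_right a b h c⟩

theorem cov2 (hA : IsBal A) : AddRightMono A :=
  ⟨fun c a b h => hA.add_le_add_right a b h c⟩

theorem zero_le_one' (hA : IsBal A) : (0 : A) ≤ 1 := by
  simpa using hA.algebraMap_mono (zero_le_one (α := ℝ))

theorem smul_mono (hA : IsBal A) {r : ℝ} (hr : 0 ≤ r) {a b : A} (h : a ≤ b) :
    r • a ≤ r • b := by
  haveI := cov1 hA; haveI := cov2 hA
  have h0 : (0 : A) ≤ r • (b - a) := by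
    rw [Algebra.smul_def]
    exact hA.mul_nonneg _ _ (by simpa using hA.algebraMap_mono hr) (sub_nonneg.2 h)
  rw [smul_sub] at h0
  exact sub_nonneg.1 h0

theorem half_le (hA : IsBal A) {a b : A} (h : a + a ≤ b + b) : a ≤ b := by
  rw [← two_smul ℝ a, ← two_smul ℝ b] at h
  have := smul_mono hA (by norm_num : (0:ℝ) ≤ 1/2) h
  rw [smul_smul, smul_smul] at this
  norm_num at this
  exact this

theorem abs_nonneg' (hA : IsBal A) (a : A) : (0 : A) ≤ a ⊔ -a := by
  haveI := cov1 hA; haveI := cov2 hA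
  refine half_le hA ?_
  calc (0:A) + 0 = a + -a := by ring
    _ ≤ (a ⊔ -a) + (a ⊔ -a) := add_le_add le_sup_left le_sup_right

theorem neg_mono (hA : IsBal A) {a b : A} (h : a ≤ b) : -b ≤ -a := by
  have := hA.add_le_add_right a b h (-a - b)
  calc -b = a + (-a - b) := by ring
    _ ≤ b + (-a - b) := this
    _ = -a := by ring

theorem smul_sup' (hA : IsBal A) {r : ℝ} (hr : 0 < r) (a b : A) :
    r • (a ⊔ b) = r • a ⊔ r • b := by
  refine le_antisymm ?_ (sup_le (smul_mono hA hr.le le_sup_left)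
    (smul_mono hA hr.le le_sup_right))
  have h : a ⊔ b ≤ r⁻¹ • (r • a ⊔ r • b) := by
    refine sup_le ?_ ?_
    · have := smul_mono hA (inv_nonneg.2 hr.le) (le_sup_left : r • a ≤ r • a ⊔ r • b)
      rwa [smul_smul, inv_mul_cancel₀ hr.ne', one_smul] at this
    · have := smul_mono hA (inv_nonneg.2 hr.le) (le_sup_right : r • b ≤ r • a ⊔ r • b)
      rwa [smul_smul, inv_mul_cancel₀ hr.ne', one_smul] at this
  have := smul_mono hA hr.le h
  rwa [smul_smul, mul_inv_cancel₀ hr.ne', one_smul] at this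

theorem abs_triangle (hA : IsBal A) (a b : A) :
    (a + b) ⊔ -(a + b) ≤ (a ⊔ -a) + (b ⊔ -b) := by
  haveI := cov1 hA; haveI := cov2 hA
  refine sup_le (add_le_add le_sup_left le_sup_left) ?_
  rw [neg_add]
  exact add_le_add le_sup_right le_sup_right

theorem abs_sub_triangle (hA : IsBal A) (a b c : A) :
    (a - c) ⊔ -(a - c) ≤ ((a - b) ⊔ -(a - b)) + ((b - c) ⊔ -(b - c)) := by
  have := abs_triangle hA (a - b) (b - c)
  simpa using this

end BalAux

namespace BalAux

variable {A : Type*} [CommRing A] [Lattice A] [Algebra ℝ A]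

theorem smul_one_mono (hA : IsBal A) {r s : ℝ} (h : r ≤ s) :
    r • (1 : A) ≤ s • (1 : A) := by
  rw [← Algebra.algebraMap_eq_smul_one, ← Algebra.algebraMap_eq_smul_one]
  exact hA.algebraMap_mono h

theorem half_smul (hA : IsBal A) {r : ℝ} {x : A} (h : (2 * r) • x ≤ 1) :
    r • x ≤ (1/2 : ℝ) • (1 : A) := by
  have h2 := smul_mono hA (by norm_num : (0:ℝ) ≤ 1/2) h
  rw [smul_smul] at h2
  have e : (1/2 : ℝ) * (2 * r) = r := by ring
  rwa [e] at h2

theorem posPart_sub_abs (hA : IsBal A) (x y : A) :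
    ((x ⊔ 0) - (y ⊔ 0)) ⊔ -((x ⊔ 0) - (y ⊔ 0)) ≤ (x - y) ⊔ -(x - y) := by
  haveI := cov1 hA; haveI := cov2 hA
  set D := (x - y) ⊔ -(x - y) with hD
  have hD0 : (0 : A) ≤ D := abs_nonneg' hA _
  have key : ∀ u v : A, ((u - v) ⊔ -(u - v)) = ((v - u) ⊔ -(v - u)) := by
    intro u v
    rw [← neg_sub u v, neg_neg, sup_comm]
  have main : ∀ u v : A, (u - v) ⊔ -(u - v) ≤ D → (u ⊔ 0) - (v ⊔ 0) ≤ D := by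
    intro u v huv
    have goal : u ⊔ 0 ≤ (v ⊔ 0) + D := by
      refine sup_le ?_ ?_
      · have h1 : u - v ≤ D := le_trans le_sup_left huv
        have h2 : u ≤ v + D := by rw [sub_le_iff_le_add] at h1; rwa [add_comm] at h1
        exact le_trans h2 (add_le_add_left le_sup_left D)
      · calc (0:A) = 0 + 0 := by ring
          _ ≤ (v ⊔ 0) + D := add_le_add le_sup_right hD0
    rw [sub_le_iff_le_add]
    rwa [add_comm]
  refine sup_le (main x y le_rfl) ?_
  rw [neg_sub]
  exact main y x (key y x ▸ le_rfl)

theorem abs_mul_le (hA : IsBal A) {c : A} {K : ℝ} (hc : c ⊔ -c ≤ K • (1 : A)) (w : A) :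
    (c * w) ⊔ -(c * w) ≤ K • (w ⊔ -w) := by
  haveI := cov1 hA; haveI := cov2 hA
  set k : A := K • (1 : A) with hk
  set W : A := w ⊔ -w with hW
  have hck : c ≤ k := le_trans le_sup_left hc
  have hnck : -c ≤ k := le_trans le_sup_right hc
  have hwW : w ≤ W := le_sup_left
  have hnwW : -w ≤ W := le_sup_right
  have h1 : (0:A) ≤ (k - c) * (W - w) :=
    hA.mul_nonneg _ _ (sub_nonneg.2 hck) (sub_nonneg.2 hwW)
  have h2 : (0:A) ≤ (k + c) * (W + w) := by
    refine hA.mul_nonneg _ _ ?_ ?_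
    · have := sub_nonneg.2 hnck; rwa [sub_neg_eq_add] at this
    · have := sub_nonneg.2 hnwW; rwa [sub_neg_eq_add] at this
  have h3 : (0:A) ≤ (k - c) * (W + w) := by
    refine hA.mul_nonneg _ _ (sub_nonneg.2 hck) ?_
    have := sub_nonneg.2 hnwW; rwa [sub_neg_eq_add] at this
  have h4 : (0:A) ≤ (k + c) * (W - w) := by
    refine hA.mul_nonneg _ _ ?_ (sub_nonneg.2 hwW)
    have := sub_nonneg.2 hnck; rwa [sub_neg_eq_add] at this
  have hkW : k * W = K • W := by rw [hk, smul_mul_assoc, one_mul]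
  have upper : c * w ≤ K • W := by
    refine half_le hA ?_
    have hsum : (0:A) ≤ (k - c) * (W + w) + (k + c) * (W - w) := add_nonneg h3 h4
    have : (k - c) * (W + w) + (k + c) * (W - w) = (k * W + k * W) - (c * w + c * w) := by ring
    rw [this] at hsum
    have := sub_nonneg.1 hsum
    calc c * w + c * w ≤ k * W + k * W := this
      _ = K • W + K • W := by rw [hkW]
  have lower : -(c * w) ≤ K • W := by
    refine half_le hA ?_
    have hsum : (0:A) ≤ (k - c) * (W - w) + (k + c) * (W + w) := add_nonneg h1 h2
    have : (k - c) * (W - w) + (k + c) * (W + w) = (k * W + k * W) - (-(c * w) + -(c * w)) := by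
      ring
    rw [this] at hsum
    have := sub_nonneg.1 hsum
    calc -(c*w) + -(c*w) ≤ k * W + k * W := this
      _ = K • W + K • W := by rw [hkW]
  exact sup_le upper lower

theorem abs_le_unit (hA : IsBal A) (a : A) :
    ∃ K : ℝ, 1 ≤ K ∧ a ⊔ -a ≤ K • (1 : A) := by
  haveI := cov1 hA; haveI := cov2 hA
  obtain ⟨n, hn1, hn⟩ := hA.strong_unit a
  obtain ⟨m, _, hm⟩ := hA.strong_unit (-a)
  refine ⟨(n + m : ℕ), ?_, ?_⟩
  · exact_mod_cast Nat.le_add_right 1 m |>.trans (Nat.add_le_add_right hn1 m)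
  have hna : a ≤ (n : ℝ) • (1 : A) := by
    rw [← Nat.cast_smul_eq_nsmul ℝ] at hn; exact hn
  have hma : -a ≤ (m : ℝ) • (1 : A) := by
    rw [← Nat.cast_smul_eq_nsmul ℝ] at hm; exact hm
  refine sup_le (hna.trans (smul_one_mono hA ?_)) (hma.trans (smul_one_mono hA ?_))
  · exact_mod_cast Nat.le_add_right n m
  · exact_mod_cast Nat.le_add_left m n

end BalAux

namespace BalAux

variable {A : Type*} [CommRing A] [Lattice A] [Algebra ℝ A]

/-- The uniform closure of an ℓ-ideal, as an ideal. -/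
def unifClosure (hA : IsBal A) (I : Ideal A) : Ideal A where
  carrier := {a | ∀ r : ℝ, 0 < r → ∃ b ∈ I, r • ((a - b) ⊔ -(a - b)) ≤ 1}
  zero_mem' := by
    intro r _
    refine ⟨0, I.zero_mem, ?_⟩
    simp [BalAux.zero_le_one' hA]
  add_mem' := by
    intro a a' ha ha' r hr
    obtain ⟨b, hb, h1⟩ := ha (2 * r) (by positivity)
    obtain ⟨b', hb', h1'⟩ := ha' (2 * r) (by positivity)
    refine ⟨b + b', I.add_mem hb hb', ?_⟩
    haveI := cov1 hA; haveI := cov2 hA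
    have hEq : a + a' - (b + b') = (a - b) + (a' - b') := by ring
    have habs : (a + a' - (b + b')) ⊔ -(a + a' - (b + b')) ≤
        ((a - b) ⊔ -(a - b)) + ((a' - b') ⊔ -(a' - b')) := by
      rw [hEq]; exact abs_triangle hA _ _
    calc r • ((a + a' - (b + b')) ⊔ -(a + a' - (b + b')))
        ≤ r • (((a - b) ⊔ -(a - b)) + ((a' - b') ⊔ -(a' - b'))) := smul_mono hA hr.le habs
      _ = r • ((a - b) ⊔ -(a - b)) + r • ((a' - b') ⊔ -(a' - b')) := smul_add ..
      _ ≤ (1/2 : ℝ) • (1:A) + (1/2 : ℝ) • (1:A) :=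
          add_le_add (half_smul hA h1) (half_smul hA h1')
      _ = 1 := by rw [← add_smul]; norm_num
  smul_mem' := by
    intro c a ha r hr
    obtain ⟨K, hK1, hKc⟩ := abs_le_unit hA c
    have hK0 : (0:ℝ) < K := lt_of_lt_of_le one_pos hK1
    obtain ⟨b, hb, h1⟩ := ha (r * K) (by positivity)
    refine ⟨c * b, I.mul_mem_left c hb, ?_⟩
    have hEq : c • a - c * b = c * (a - b) := by rw [smul_eq_mul]; ring
    have habs := abs_mul_le hA hKc (a - b)
    calc r • ((c • a - c * b) ⊔ -(c • a - c * b))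
        = r • ((c * (a - b)) ⊔ -(c * (a - b))) := by rw [hEq]
      _ ≤ r • (K • ((a - b) ⊔ -(a - b))) := smul_mono hA hr.le habs
      _ = (r * K) • ((a - b) ⊔ -(a - b)) := by rw [smul_smul]
      _ ≤ 1 := h1

theorem subset_unifClosure (hA : IsBal A) (I : Ideal A) :
    (I : Set A) ⊆ (unifClosure hA I : Set A) := by
  intro a ha
  intro r _
  exact ⟨a, ha, by simp [BalAux.zero_le_one' hA]⟩

theorem isLIdeal_unifClosure (hA : IsBal A) (I : Ideal A) (hI : IsLIdeal I) :
    IsLIdeal (unifClosure hA I) := by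
  haveI := cov1 hA; haveI := cov2 hA
  intro a b hbJ habs r hr
  obtain ⟨c, hc, h1⟩ := hbJ r hr
  set e : A := c ⊔ -c with he'
  have he0 : (0:A) ≤ e := abs_nonneg' hA c
  have hnee : -e ≤ e := le_trans (neg_nonpos.2 he0) he0
  have he : e ∈ I := hI e c hc (sup_le le_rfl hnee)
  set d : A := (a ⊔ -e) ⊓ e with hd'
  have hde : d ≤ e := inf_le_right
  have hned : -e ≤ d := le_inf le_sup_right hnee
  have hnde : -d ≤ e := by simpa using neg_mono hA hned
  have hd : d ∈ I := hI d e he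
    (sup_le (hde.trans le_sup_left) (hnde.trans le_sup_left))
  refine ⟨d, hd, ?_⟩
  set D : A := (b - c) ⊔ -(b - c) with hD'
  have hD0 : (0:A) ≤ D := abs_nonneg' hA _
  have hBD : b ⊔ -b ≤ e + D := by
    have h5 := abs_triangle hA c (b - c)
    rw [show c + (b - c) = b by ring] at h5
    exact h5
  have haB : a ⊔ -a ≤ e + D := le_trans habs hBD
  have haD : a - e ≤ D := by
    have h2 : a ≤ e + D := le_trans le_sup_left haB
    rwa [sub_le_iff_le_add, add_comm]
  have hnaD : -e - a ≤ D := by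
    have h2 : -a ≤ e + D := le_trans le_sup_right haB
    have : -a - e ≤ D := by rwa [sub_le_iff_le_add, add_comm]
    rwa [show -e - a = -a - e by ring]
  have claim1 : a - d ≤ D := by
    have h3 : a ⊓ e ≤ d := le_inf (inf_le_left.trans le_sup_left) inf_le_right
    have h4 : a - d ≤ a - a ⊓ e := by
      have h3n := neg_mono hA h3
      calc a - d = a + -d := sub_eq_add_neg ..
        _ ≤ a + -(a ⊓ e) := add_le_add_right h3n a
        _ = a - a ⊓ e := (sub_eq_add_neg ..).symm
    refine h4.trans ?_
    rw [sub_inf]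
    exact sup_le (by simp [hD0]) haD
  have claim2 : d - a ≤ D := by
    have h4 : d - a ≤ (a ⊔ -e) - a := by
      have h6 := hA.add_le_add_right _ _ (inf_le_left : d ≤ a ⊔ -e) (-a)
      rw [sub_eq_add_neg, sub_eq_add_neg]
      exact h6
    refine h4.trans ?_
    rw [sup_sub]
    exact sup_le (by simp [hD0]) hnaD
  have : (a - d) ⊔ -(a - d) ≤ D := by
    refine sup_le claim1 ?_
    rw [neg_sub]; exact claim2
  exact le_trans (smul_mono hA hr.le this) h1

end BalAux

namespace BalAux

variable {A : Type*} [CommRing A] [Lattice A] [Algebra ℝ A]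

theorem isArchLIdeal_unifClosure (hA : IsBal A) (I : Ideal A) :
    IsArchLIdeal (unifClosure hA I) := by
  haveI := cov1 hA; haveI := cov2 hA
  intro a b hyp r hr
  obtain ⟨K, hK1, hKb⟩ := abs_le_unit hA b
  have hK0 : (0:ℝ) < K := lt_of_lt_of_le one_pos hK1
  set n : ℕ := max 1 ⌈2 * r * K⌉₊ with hn'
  have hn1 : 1 ≤ n := le_max_left _ _
  have hnR : (0:ℝ) < (n:ℝ) := by exact_mod_cast hn1
  have hnbig : 2 * r * K ≤ (n:ℝ) := by
    refine le_trans (Nat.le_ceil _) ?_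
    exact_mod_cast le_max_right 1 ⌈2 * r * K⌉₊
  set lam : ℝ := ((n:ℝ))⁻¹ with hlam'
  have hlam0 : 0 < lam := inv_pos.2 hnR
  have hlam1 : lam ≤ 1 := by
    rw [hlam']
    rw [inv_le_one_iff₀]
    right; exact_mod_cast hn1
  set p : A := (n • a - b) ⊔ 0 with hp'
  have hpJ : p ∈ unifClosure hA I := hyp n hn1
  obtain ⟨c, hc, hpc⟩ := hpJ (2 * r) (by positivity)
  refine ⟨lam • c, ?_, ?_⟩
  · rw [Algebra.smul_def]
    exact I.mul_mem_left _ hc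
  · -- Step A: lam • p = (a - lam • b) ⊔ 0
    have hlp : lam • p = (a - lam • b) ⊔ 0 := by
      rw [hp', smul_sup' hA hlam0, smul_zero, smul_sub]
      congr 2
      rw [← Nat.cast_smul_eq_nsmul ℝ n a, smul_smul, hlam', inv_mul_cancel₀ hnR.ne',
        one_smul]
    have stepA : ((a ⊔ 0) - lam • p) ⊔ -((a ⊔ 0) - lam • p) ≤ (lam * K) • (1:A) := by
      rw [hlp]
      have h1 := posPart_sub_abs hA a (a - lam • b)
      have h2 : a - (a - lam • b) = lam • b := by ring
      rw [h2] at h1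
      refine h1.trans ?_
      have h3 : (lam • b) ⊔ -(lam • b) = lam • (b ⊔ -b) := by
        rw [smul_sup' hA hlam0, smul_neg]
      rw [h3]
      calc lam • (b ⊔ -b) ≤ lam • (K • (1:A)) := smul_mono hA hlam0.le hKb
        _ = (lam * K) • (1:A) := by rw [smul_smul]
    -- Step B
    have stepB : r • ((lam • p - lam • c) ⊔ -(lam • p - lam • c)) ≤ (lam * (1/2)) • (1:A) := by
      have h1 : lam • p - lam • c = lam • (p - c) := by rw [smul_sub]
      rw [h1]
      have h2 : (lam • (p - c)) ⊔ -(lam • (p - c)) = lam • ((p - c) ⊔ -(p - c)) := by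
        rw [smul_sup' hA hlam0, smul_neg]
      rw [h2, smul_smul, mul_comm r lam, ← smul_smul]
      have h3 : r • ((p - c) ⊔ -(p - c)) ≤ (1/2 : ℝ) • (1:A) := half_smul hA hpc
      calc lam • (r • ((p - c) ⊔ -(p - c))) ≤ lam • ((1/2 : ℝ) • (1:A)) :=
            smul_mono hA hlam0.le h3
        _ = (lam * (1/2)) • (1:A) := by rw [smul_smul]
    -- combine
    have tri := abs_sub_triangle hA (a ⊔ 0) (lam • p) (lam • c)
    have main : r • (((a ⊔ 0) - lam • c) ⊔ -((a ⊔ 0) - lam • c)) ≤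
        (r * (lam * K)) • (1:A) + (lam * (1/2)) • (1:A) := by
      calc r • (((a ⊔ 0) - lam • c) ⊔ -((a ⊔ 0) - lam • c))
          ≤ r • ((((a ⊔ 0) - lam • p) ⊔ -((a ⊔ 0) - lam • p)) +
              ((lam • p - lam • c) ⊔ -(lam • p - lam • c))) := smul_mono hA hr.le tri
        _ = r • (((a ⊔ 0) - lam • p) ⊔ -((a ⊔ 0) - lam • p)) +
              r • ((lam • p - lam • c) ⊔ -(lam • p - lam • c)) := smul_add ..
        _ ≤ r • ((lam * K) • (1:A)) + (lam * (1/2)) • (1:A) :=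
            add_le_add (smul_mono hA hr.le stepA) stepB
        _ = (r * (lam * K)) • (1:A) + (lam * (1/2)) • (1:A) := by rw [smul_smul]
    refine main.trans ?_
    have e1 : r * (lam * K) ≤ 1/2 := by
      rw [hlam']
      rw [mul_comm, mul_assoc]
      rw [inv_mul_le_iff₀ hnR]
      calc K * r = (2 * r * K) * (1/2) := by ring
        _ ≤ (n:ℝ) * (1/2) := by
            apply mul_le_mul_of_nonneg_right hnbig; norm_num
        _ = (n:ℝ) * (1/2) := rfl
      -- goal may differ; adjust below
    have e2 : lam * (1/2) ≤ 1/2 := by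
      nlinarith [hlam1, hlam0.le]
    calc (r * (lam * K)) • (1:A) + (lam * (1/2)) • (1:A)
        ≤ (1/2 : ℝ) • (1:A) + (1/2 : ℝ) • (1:A) :=
          add_le_add (smul_one_mono hA e1) (smul_one_mono hA e2)
      _ = 1 := by rw [← add_smul]; norm_num

end BalAux

/-- In a bal-algebra, if the archimedean hull of an ℓ-ideal `I` is all of `A`,
then `I = A`. -/
theorem eq_top_of_archHull_eq_top {A : Type*} [CommRing A] [Lattice A] [Algebra ℝ A]
    (hA : IsBal A) (I : Ideal A) (hI : IsLIdeal I)
    (h : archHull (I : Set A) = ⊤) : I = ⊤ := by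
  haveI := BalAux.cov1 hA; haveI := BalAux.cov2 hA
  set J : Ideal A := BalAux.unifClosure hA I with hJ'
  have hmem : J ∈ {K : Ideal A | IsLIdeal K ∧ IsArchLIdeal K ∧ (I : Set A) ⊆ ↑K} :=
    ⟨BalAux.isLIdeal_unifClosure hA I hI, BalAux.isArchLIdeal_unifClosure hA I,
      BalAux.subset_unifClosure hA I⟩
  have hle : archHull (I : Set A) ≤ J := sInf_le hmem
  have hJtop : (1 : A) ∈ J := by
    have : (⊤ : Ideal A) ≤ J := h ▸ hle
    exact this Submodule.mem_top
  obtain ⟨b, hb, hb1⟩ := hJtop 2 two_pos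
  have habs : ((1:A) - b) ⊔ -((1:A) - b) ≤ (1/2 : ℝ) • (1:A) := by
    have h2 : (2 * 1 : ℝ) • (((1:A) - b) ⊔ -((1:A) - b)) ≤ 1 := by
      rw [mul_one]; exact hb1
    have := BalAux.half_smul hA h2
    rwa [one_smul] at this
  have hbge : (1/2 : ℝ) • (1:A) ≤ b := by
    have h3 : (1:A) - b ≤ (1/2 : ℝ) • (1:A) := le_trans le_sup_left habs
    have h4 : (1:A) - (1/2 : ℝ) • (1:A) ≤ b := by
      rw [sub_le_iff_le_add] at h3 ⊢
      rwa [add_comm] at h3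
    refine le_trans (le_of_eq ?_) h4
    rw [eq_sub_iff_add_eq, ← add_smul]
    norm_num
  have h1bb : (1:A) ≤ b + b := by
    calc (1:A) = (1/2 : ℝ) • (1:A) + (1/2 : ℝ) • (1:A) := by rw [← add_smul]; norm_num
      _ ≤ b + b := add_le_add hbge hbge
  have h1mem : (1:A) ∈ I := by
    refine hI 1 (b + b) (I.add_mem hb hb) ?_
    refine sup_le (h1bb.trans le_sup_left) ?_
    have : -(1:A) ≤ 1 :=
      le_trans (neg_nonpos.2 (BalAux.zero_le_one' hA)) (BalAux.zero_le_one' hA)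
    exact (this.trans h1bb).trans le_sup_left
  exact Ideal.eq_top_iff_one I |>.2 h1mem
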